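/- Let w ∈ ℂ with r = |w| > 1, let α > 0, z ∈ ℂ with z ≠ 0, and suppose q_ζ(z) = α^{−ζ/2}(w^{ζ+1} − w^{−ζ−1})/(w − w^{−1}) for all ζ. Define φ_L(2ζ) = −(q_ζ(z) + α^{−1}q_{ζ−1}(z))/(z·q_ζ(z)) and s_L(z) = −1/z − α^{−1/2}w^{−1}/z. Then |φ_L(2ζ) − s_L(z)| ≤ 2α^{−1/2}·r^{−2ζ−1}/(|z|·(1 − r^{−2ζ−2})). -/

import Mathlib

/-- Quantitative convergence of `φ_L(2ζ)` to `s_L(z)`: if `r = |w| > 1`,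
`α > 0`, `z ≠ 0`, and `q ζ = α^{−ζ/2}(w^{ζ+1} − w^{−ζ−1})/(w − w⁻¹)` for all
`ζ ∈ ℤ`, then with `φ_L(2ζ) = −(q_ζ + α⁻¹q_{ζ−1})/(z·q_ζ)` and
`s_L(z) = −1/z − α^{−1/2}w⁻¹/z`, one has
`|φ_L(2ζ) − s_L(z)| ≤ 2α^{−1/2}·r^{−2ζ−1}/(|z|·(1 − r^{−2ζ−2}))`. -/
theorem stmt13 (α : ℝ) (hα : 0 < α) (w z : ℂ)
    (hr : 1 < ‖w‖) (hz : z ≠ 0)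
    (q : ℤ → ℂ)
    (hq : ∀ ζ : ℤ, q ζ
      = (α : ℂ) ^ (-(ζ : ℂ) / 2) * (w ^ (ζ + 1) - w ^ (-ζ - 1)) / (w - w⁻¹))
    (ζ : ℕ) :
    ‖(-(q (ζ : ℤ) + (α : ℂ)⁻¹ * q ((ζ : ℤ) - 1)) / (z * q (ζ : ℤ))
          - (-1 / z - ((Real.sqrt α : ℝ) : ℂ)⁻¹ * w⁻¹ / z))‖
      ≤ 2 * (Real.sqrt α)⁻¹ * ‖w‖ ^ (-(2 * (ζ : ℤ) + 1)) /
          (‖z‖ * (1 - ‖w‖ ^ (-(2 * (ζ : ℤ) + 2)))) := by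
  set r := ‖w‖ with hrdef
  have hr0 : (0:ℝ) < r := lt_trans one_pos hr
  have hrne : r ≠ 0 := hr0.ne'
  have hw0 : w ≠ 0 := norm_pos_iff.mp hr0
  have hα0 : (α : ℂ) ≠ 0 := by exact_mod_cast hα.ne'
  set s : ℂ := ((Real.sqrt α : ℝ) : ℂ) with hs
  have hsqrt_pos : 0 < Real.sqrt α := Real.sqrt_pos.2 hα
  have hs0 : s ≠ 0 := by
    simp [hs, Complex.ofReal_ne_zero, hsqrt_pos.ne']
  have hss : s * s = (α : ℂ) := by
    rw [hs, ← Complex.ofReal_mul, Real.mul_self_sqrt hα.le]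
  set u : ℂ := w ^ (ζ : ℤ) with hu
  have hu0 : u ≠ 0 := zpow_ne_zero _ hw0
  -- cpow facts
  set c : ℂ := (α : ℂ) ^ (-(((ζ:ℤ) : ℤ) : ℂ) / 2) with hc
  have hc0 : c ≠ 0 := by
    rw [hc, Complex.cpow_def_of_ne_zero hα0]; exact Complex.exp_ne_zero _
  have hhalf : (α : ℂ) ^ ((1:ℂ)/2) = s := by
    have h1 : ((α ^ ((1:ℝ)/2) : ℝ) : ℂ) = (α : ℂ) ^ (((1:ℝ)/2 : ℝ) : ℂ) :=
      Complex.ofReal_cpow hα.le _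
    rw [hs, Real.sqrt_eq_rpow, h1]
    norm_num
  have hc1 : (α : ℂ) ^ (-(((ζ:ℤ) - 1 : ℤ) : ℂ) / 2) = c * s := by
    have : (-(((ζ:ℤ) - 1 : ℤ) : ℂ) / 2) = -(((ζ:ℤ) : ℤ) : ℂ)/2 + 1/2 := by
      push_cast; ring
    rw [this, Complex.cpow_add _ _ hα0, hhalf, hc]
  -- zpow facts
  have hz1 : w ^ ((ζ:ℤ) + 1) = u * w := zpow_add_one₀ hw0 _
  have hz2 : w ^ (-(ζ:ℤ) - 1) = u⁻¹ * w⁻¹ := by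
    have : (-(ζ:ℤ) - 1) = -((ζ:ℤ) + 1) := by ring
    rw [this, zpow_neg, hz1, mul_inv]
  have hz3 : w ^ ((ζ:ℤ) - 1 + 1) = u := by norm_num [hu]
  have hz4 : w ^ (-((ζ:ℤ) - 1) - 1) = u⁻¹ := by
    have : (-((ζ:ℤ) - 1) - 1) = -(ζ:ℤ) := by ring
    rw [this, zpow_neg, hu]
  clear_value s u c
  -- nonvanishing of the denominators
  have habsu : ‖u‖ = r ^ (ζ:ℤ) := by rw [hu, norm_zpow]
  have hlow : r ^ (-(ζ:ℤ) - 1) < r ^ ((ζ:ℤ) + 1) := by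
    apply zpow_lt_zpow_right₀ hr; omega
  have habsUW : ‖u * w‖ = r ^ ((ζ:ℤ) + 1) := by
    rw [norm_mul, habsu]; exact (zpow_add_one₀ hrne _).symm
  have habsUWinv : ‖u⁻¹ * w⁻¹‖ = r ^ (-(ζ:ℤ) - 1) := by
    rw [norm_mul, norm_inv, norm_inv, habsu, ← zpow_neg, ← zpow_neg_one,
      ← zpow_add₀ hrne]
    congr 1
  have hN0 : u * w - u⁻¹ * w⁻¹ ≠ 0 := by
    intro h
    have := congrArg norm (sub_eq_zero.mp h)
    rw [habsUW, habsUWinv] at this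
    exact ne_of_gt hlow this
  have hW0 : w - w⁻¹ ≠ 0 := by
    intro h
    have := congrArg norm (sub_eq_zero.mp h)
    rw [norm_inv] at this
    have h1 : (1:ℝ) < r⁻¹ := this ▸ hr
    have h2 : r⁻¹ < 1 := by
      rw [inv_lt_one_iff₀]; right; exact hr
    linarith
  have hWW : w - w⁻¹ = (w * w - 1) / w := by
    field_simp
  have hNW : u * w - u⁻¹ * w⁻¹ = (u * w * (u * w) - 1) / (u * w) := by
    field_simp
  have hw2 : w * w - 1 ≠ 0 := by
    intro h
    apply hW0
    rw [hWW, h, zero_div]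
  have hN2 : u * w * (u * w) - 1 ≠ 0 := by
    intro h
    apply hN0
    rw [hNW, h, zero_div]
  have hq0 : q (ζ:ℤ) ≠ 0 := by
    rw [hq, hz1, hz2, ← hc]
    exact div_ne_zero (mul_ne_zero hc0 hN0) hW0
  -- clean fraction forms for q
  have d1 : q (ζ:ℤ) = c * (u * w * (u * w) - 1) / (u * (w * w - 1)) := by
    rw [hq, hz1, hz2, ← hc, hNW, hWW]
    field_simp
  have d2 : q ((ζ:ℤ) - 1) = c * s * ((u * u - 1) * w) / (u * (w * w - 1)) := by
    rw [hq, hz3, hz4, hc1, hWW]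
    field_simp
  have stepA : -(q (ζ : ℤ) + (α : ℂ)⁻¹ * q ((ζ : ℤ) - 1)) / (z * q (ζ : ℤ))
          - (-1 / z - s⁻¹ * w⁻¹ / z)
      = (s⁻¹ * w⁻¹ * q (ζ:ℤ) - (α : ℂ)⁻¹ * q ((ζ:ℤ) - 1)) / (z * q (ζ:ℤ)) := by
    have e : (-1 : ℂ) / z - s⁻¹ * w⁻¹ / z
        = ((-1 - s⁻¹ * w⁻¹) * q (ζ:ℤ)) / (z * q (ζ:ℤ)) := by
      rw [mul_div_mul_right _ _ hq0, sub_div]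
    rw [e, div_sub_div_same]
    congr 1
    ring
  have stepB : s⁻¹ * w⁻¹ * q (ζ:ℤ) - (α : ℂ)⁻¹ * q ((ζ:ℤ) - 1)
      = c / (s * (u * w)) := by
    rw [d1, d2, ← hss]
    field_simp
    rw [div_eq_one_iff_eq (by rw [show w ^ 2 - 1 = w * w - 1 by ring]; exact hw2)]; ring
  have stepC : (c / (s * (u * w))) / (z * q (ζ:ℤ))
      = (w * w - 1) / (s * (w * (z * (u * w * (u * w) - 1)))) := by
    rw [d1]
    field_simp
  have key : -(q (ζ : ℤ) + (α : ℂ)⁻¹ * q ((ζ : ℤ) - 1)) / (z * q (ζ : ℤ))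
          - (-1 / z - s⁻¹ * w⁻¹ / z)
      = (w * w - 1) / (s * (w * (z * (u * w * (u * w) - 1)))) := by
    rw [stepA, stepB, stepC]
  have hz0 : 0 < ‖z‖ := norm_pos_iff.mpr hz
  have habs_s : ‖s‖ = Real.sqrt α := by
    rw [hs, Complex.norm_real, Real.norm_eq_abs, abs_of_pos hsqrt_pos]
  have hnum : ‖w * w - 1‖ ≤ 2 * (r * r) := by
    have h1 : ‖w * w - 1‖ ≤ ‖w * w‖ + ‖(1:ℂ)‖ := by
      exact norm_sub_le (w * w) 1
    rw [norm_mul, norm_one] at h1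
    nlinarith [hr.le, h1]
  have habsM : ‖u * w * (u * w)‖ = r ^ (2*(ζ:ℤ)+2) := by
    rw [norm_mul, habsUW, ← zpow_add₀ hrne]
    congr 1
    ring
  have hMlow : r ^ (2*(ζ:ℤ)+2) - 1 ≤ ‖u * w * (u * w) - 1‖ := by
    have h := norm_sub_norm_le (u * w * (u * w)) 1
    simp only [norm_one] at h
    rw [habsM] at h
    exact h
  have hC1 : 1 < r ^ (2*(ζ:ℤ)+2) := by
    have h := zpow_lt_zpow_right₀ hr (show (0:ℤ) < 2*(ζ:ℤ)+2 by omega)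
    simpa using h
  have hMpos : (0:ℝ) < r ^ (2*(ζ:ℤ)+2) - 1 := sub_pos.2 hC1
  rw [key, norm_div, norm_mul, norm_mul, norm_mul, habs_s]
  calc ‖w * w - 1‖
        / (Real.sqrt α * (‖w‖ * (‖z‖ * ‖u * w * (u * w) - 1‖)))
      ≤ 2 * (r * r)
        / (Real.sqrt α * (r * (‖z‖ * (r ^ (2*(ζ:ℤ)+2) - 1)))) := by
        apply div_le_div₀ (by positivity) hnum
          (mul_pos hsqrt_pos (mul_pos hr0 (mul_pos hz0 hMpos)))
        exact mul_le_mul_of_nonneg_left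
          (mul_le_mul_of_nonneg_left
            (mul_le_mul_of_nonneg_left hMlow hz0.le) hr0.le) hsqrt_pos.le
    _ = 2 * (Real.sqrt α)⁻¹ * r ^ (-(2 * (ζ:ℤ) + 1))
        / (‖z‖ * (1 - r ^ (-(2 * (ζ:ℤ) + 2)))) := by
        rw [show -(2*(ζ:ℤ)+1) = 1 - (2*(ζ:ℤ)+2) by ring,
          show -(2*(ζ:ℤ)+2) = 0 - (2*(ζ:ℤ)+2) by ring,
          zpow_sub₀ hrne, zpow_sub₀ hrne, zpow_one, zpow_zero]
        have hCne : r ^ (2*(ζ:ℤ)+2) ≠ 0 := (zpow_pos hr0 _).ne'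
        field_simp
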